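/- For any density matrices ρ₀, ρ₁ on ℂ^n and any positive semidefinite matrices M₀, M₁ with M₀ + M₁ = I, the (real, nonnegative) success probability satisfies (1/2)·Tr(M₀ρ₀) + (1/2)·Tr(M₁ρ₁) ≤ (1/2)(1 + Δ(ρ₀,ρ₁)). In particular, if Δ(ρ₀,ρ₁) ≤ ε then no two-outcome measurement identifies a uniformly random one of the two states with probability exceeding (1/2)(1 + ε). -/

import Mathlib

open Matrix Kronecker ComplexOrder

/-- The positive semidefinite square root, as `Matrix.PosSemidef.sqrt` was defined in older Mathlib. -/
noncomputable def PosSemidef.oldSqrt {n : Type*} [Fintype n] [DecidableEq n] {A : Matrix n n ℂ}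
    (hA : A.PosSemidef) : Matrix n n ℂ :=
  hA.1.eigenvectorUnitary.1 * diagonal ((↑) ∘ (√·) ∘ hA.1.eigenvalues) *
    (star hA.1.eigenvectorUnitary : Matrix n n ℂ)

/-- The trace norm `‖A‖₁ = Tr √(Aᴴ A)` of a complex matrix. -/
noncomputable def traceNorm {n : Type*} [Fintype n] [DecidableEq n] (A : Matrix n n ℂ) : ℝ :=
  ((PosSemidef.oldSqrt (Matrix.posSemidef_conjTranspose_mul_self A)).trace).re

/-- The trace distance `Δ(ρ,σ) = ‖ρ - σ‖₁ / 2`. -/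
noncomputable def traceDist {n : Type*} [Fintype n] [DecidableEq n] (ρ σ : Matrix n n ℂ) : ℝ :=
  traceNorm (ρ - σ) / 2

open scoped Classical in
/-- Positive semidefinite square root (junk value `0` on non-PSD matrices). -/
noncomputable def psdSqrt {n : Type*} [Fintype n] [DecidableEq n] (A : Matrix n n ℂ) :
    Matrix n n ℂ :=
  if h : A.PosSemidef then PosSemidef.oldSqrt h else 0

/-- The fidelity `F(ρ,σ) = ‖√ρ √σ‖₁`. -/
noncomputable def fidelity {n : Type*} [Fintype n] [DecidableEq n] (ρ σ : Matrix n n ℂ) : ℝ :=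
  traceNorm (psdSqrt ρ * psdSqrt σ)

/-- A density matrix: positive semidefinite with trace 1. -/
def IsDensityMatrix {n : Type*} [Fintype n] [DecidableEq n] (ρ : Matrix n n ℂ) : Prop :=
  ρ.PosSemidef ∧ ρ.trace = 1

/-- The projector `|b⟩⟨b|` on ℂ². -/
noncomputable def proj (b : Bool) : Matrix Bool Bool ℂ := Matrix.single b b 1

/-- The strong oblivious transfer channel `F_{(x₀,x₁)}`. -/
noncomputable def sotChannel (x₀ x₁ : Bool) (ρ : Matrix (Bool × Bool) (Bool × Bool) ℂ) :
    Matrix (Bool × Bool) (Bool × Bool) ℂ :=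
  ∑ i : Bool, ∑ i' : Bool,
    ρ (i, i') (i, i') •
      (((1/2 : ℂ) • (1 : Matrix Bool Bool ℂ)) ⊗ₖ proj (xor (bif xor i i' then x₁ else x₀) i'))

lemma psd_diag_re_nonneg {m : Type*} [Fintype m] [DecidableEq m]
    {P : Matrix m m ℂ} (hP : P.PosSemidef) (i : m) : 0 ≤ (P i i).re := by
  have := hP.re_dotProduct_nonneg (Pi.single i 1)
  simpa [dotProduct, Matrix.mulVec, Pi.single_apply, Finset.sum_ite_eq,
    Finset.sum_ite_eq', apply_ite] using this

/-- Holevo–Helstrom, optimality direction. -/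
theorem stmt_3 {n : ℕ} (ρ₀ ρ₁ : Matrix (Fin n) (Fin n) ℂ)
    (h₀ : IsDensityMatrix ρ₀) (h₁ : IsDensityMatrix ρ₁)
    (M₀ M₁ : Matrix (Fin n) (Fin n) ℂ)
    (hM₀ : M₀.PosSemidef) (hM₁ : M₁.PosSemidef) (hsum : M₀ + M₁ = 1) :
    (1/2 : ℝ) * ((M₀ * ρ₀).trace).re + (1/2 : ℝ) * ((M₁ * ρ₁).trace).re ≤
      (1/2 : ℝ) * (1 + traceDist ρ₀ ρ₁) := by
  obtain ⟨hρ₀psd, hρ₀tr⟩ := h₀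
  obtain ⟨hρ₁psd, hρ₁tr⟩ := h₁
  have hΔ : (ρ₀ - ρ₁).IsHermitian := hρ₀psd.1.sub hρ₁psd.1
  set Δ : Matrix (Fin n) (Fin n) ℂ := ρ₀ - ρ₁ with hΔdef
  set U : Matrix (Fin n) (Fin n) ℂ := (hΔ.eigenvectorUnitary : Matrix (Fin n) (Fin n) ℂ) with hU
  set lam : Fin n → ℝ := hΔ.eigenvalues with hlam
  set D : Matrix (Fin n) (Fin n) ℂ := diagonal (fun i => ((lam i : ℝ) : ℂ)) with hD
  set D' : Matrix (Fin n) (Fin n) ℂ := diagonal (fun i => ((|lam i| : ℝ) : ℂ)) with hD'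
  have hUU : star U * U = 1 := (Matrix.mem_unitaryGroup_iff').mp hΔ.eigenvectorUnitary.2
  have hUU' : U * star U = 1 := (Matrix.mem_unitaryGroup_iff).mp hΔ.eigenvectorUnitary.2
  have hspec : Δ = U * D * star U := hΔ.spectral_theorem
  set S : Matrix (Fin n) (Fin n) ℂ := U * D' * star U with hS
  have hSpsd : S.PosSemidef := by
    have hd : D'.PosSemidef :=
      Matrix.PosSemidef.diagonal fun i => by positivity
    have := hd.mul_mul_conjTranspose_same U
    simpa only [← Matrix.star_eq_conjTranspose] using this
  have hsq : S ^ 2 = Δᴴ * Δ := by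
    have h1 : S ^ 2 = U * (D' * D') * star U := by
      rw [pow_two, hS, show U * D' * star U * (U * D' * star U)
          = U * D' * (star U * U) * D' * star U by noncomm_ring, hUU]
      noncomm_ring
    have h2 : Δᴴ * Δ = U * (D * D) * star U := by
      rw [hΔ.eq, hspec, show U * D * star U * (U * D * star U)
          = U * D * (star U * U) * D * star U by noncomm_ring, hUU]
      noncomm_ring
    have hDD : D' * D' = D * D := by
      rw [hD, hD', Matrix.diagonal_mul_diagonal, Matrix.diagonal_mul_diagonal]
      have hfun : (fun i => ((|lam i| : ℝ) : ℂ) * ((|lam i| : ℝ) : ℂ))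
          = fun i => ((lam i : ℝ) : ℂ) * ((lam i : ℝ) : ℂ) := by
        funext i
        norm_cast
        rw [abs_mul_abs_self]
      rw [hfun]
    rw [h1, h2, hDD]
  have hsqrt : PosSemidef.oldSqrt (Matrix.posSemidef_conjTranspose_mul_self Δ) = S := by
    open scoped MatrixOrder in
    have hP := Matrix.posSemidef_conjTranspose_mul_self Δ
    open scoped MatrixOrder in
    have e : PosSemidef.oldSqrt hP = CFC.sqrt (Δᴴ * Δ) := by
      rw [CFC.sqrt_eq_cfc, cfc_nnreal_eq_real _ _ hP.nonneg, hP.1.cfc_eq]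
      simp only [PosSemidef.oldSqrt, IsHermitian.cfc, Unitary.conjStarAlgAut_apply]
      congr 3
      funext i
      simp [Real.coe_sqrt, hP.eigenvalues_nonneg i]
    open scoped MatrixOrder in
    rw [e]
    open scoped MatrixOrder in
    exact CFC.sqrt_unique (by rw [← hsq, sq]) hSpsd.nonneg
  have htn : traceNorm Δ = ∑ i, |lam i| := by
    rw [traceNorm, hsqrt, hS, Matrix.trace_mul_comm, ← Matrix.mul_assoc, hUU, Matrix.one_mul,
      hD', Matrix.trace_diagonal]
    simp [Complex.re_sum]
  have htrD : Δ.trace = ∑ i, ((lam i : ℝ) : ℂ) := by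
    rw [hspec, Matrix.trace_mul_comm, ← Matrix.mul_assoc, hUU, Matrix.one_mul, hD,
      Matrix.trace_diagonal]
  have htrΔ : Δ.trace = 0 := by rw [hΔdef, Matrix.trace_sub, hρ₀tr, hρ₁tr, sub_self]
  have hsum0 : ∑ i, lam i = 0 := by
    have := htrD.symm.trans htrΔ
    have := congrArg Complex.re this
    simpa [Complex.re_sum] using this
  set N : Matrix (Fin n) (Fin n) ℂ := star U * M₀ * U with hN
  have hNpsd : N.PosSemidef := by
    have := hM₀.conjTranspose_mul_mul_same U
    simpa only [← Matrix.star_eq_conjTranspose] using this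
  have hNle : ∀ i, (N i i).re ≤ 1 := by
    intro i
    have hcompl : (1 - N : Matrix (Fin n) (Fin n) ℂ).PosSemidef := by
      have h1N : (1 - N : Matrix (Fin n) (Fin n) ℂ) = star U * M₁ * U := by
        have hM₀' : M₀ = 1 - M₁ := eq_sub_of_add_eq hsum
        rw [hN, hM₀', Matrix.mul_sub, Matrix.sub_mul, Matrix.mul_one, hUU, sub_sub_cancel]
      rw [h1N]
      have := hM₁.conjTranspose_mul_mul_same U
      simpa only [← Matrix.star_eq_conjTranspose] using this
    have := psd_diag_re_nonneg hcompl i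
    simp only [Matrix.sub_apply, Matrix.one_apply_eq, Complex.sub_re, Complex.one_re] at this
    linarith
  have hNnn : ∀ i, 0 ≤ (N i i).re := fun i => psd_diag_re_nonneg hNpsd i
  have htrM : ((M₀ * Δ).trace).re = ∑ i, (N i i).re * lam i := by
    have h3 : (M₀ * Δ).trace = (N * D).trace := by
      rw [hspec, hN, show M₀ * (U * D * star U) = (U * (star U * M₀ * U * D)) * star U by
        rw [show U * (star U * M₀ * U * D) = (U * star U) * M₀ * U * D by noncomm_ring, hUU']
        noncomm_ring]
      rw [Matrix.trace_mul_comm, ← Matrix.mul_assoc, hUU, Matrix.one_mul]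
    rw [h3, Matrix.trace, hD]
    simp only [Matrix.diag_apply, Matrix.mul_diagonal, Complex.re_sum]
    congr 1
    ext i
    simp [Complex.mul_re]
  have hkey : ((M₀ * Δ).trace).re ≤ traceNorm Δ / 2 := by
    rw [htrM]
    have hb : ∀ i ∈ Finset.univ, (N i i).re * lam i ≤ (|lam i| + lam i) / 2 := by
      intro i _
      rcases le_or_gt 0 (lam i) with h | h
      · have : (N i i).re * lam i ≤ 1 * lam i := mul_le_mul_of_nonneg_right (hNle i) h
        rw [abs_of_nonneg h]; linarith
      · have : (N i i).re * lam i ≤ 0 := mul_nonpos_of_nonneg_of_nonpos (hNnn i) h.le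
        rw [abs_of_neg h]; linarith
    calc ∑ i, (N i i).re * lam i ≤ ∑ i, (|lam i| + lam i) / 2 := Finset.sum_le_sum hb
      _ = traceNorm Δ / 2 := by
          rw [← Finset.sum_div, Finset.sum_add_distrib, hsum0, add_zero, htn]
  have hM₁ρ : ((M₁ * ρ₁).trace) = 1 - (M₀ * ρ₁).trace := by
    have h4 : M₁ = 1 - M₀ := eq_sub_of_add_eq' hsum
    rw [h4, Matrix.sub_mul, Matrix.one_mul, Matrix.trace_sub, hρ₁tr]
  have hsplit : ((M₀ * ρ₀).trace).re + ((M₁ * ρ₁).trace).re = 1 + ((M₀ * Δ).trace).re := by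
    rw [hM₁ρ, hΔdef, Matrix.mul_sub, Matrix.trace_sub]
    simp
    ring
  have hfin : ((M₀ * ρ₀).trace).re + ((M₁ * ρ₁).trace).re ≤ 1 + traceDist ρ₀ ρ₁ := by
    rw [hsplit, traceDist]
    linarith [hkey]
  linarith
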